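/- arXiv:1508.06779 — 2 statements merged into one kernel-verified Lean document; each statement's English description precedes it below -/
import Mathlib

section
/- (Theorem 5, algebra case) Let P : E → B be a fibration with fibrewise binary coproducts and dependent coproducts (left adjoints ∐_{u_k} ⊣ u_k*). For a signature (F, u) with F = ⟨F₁, F₂⟩ : P_I → P_{J₁} × P_{J₂} and u = (u₁ : J₁ → I, u₂ : J₂ → I), there is an isomorphism of categories Dialg(F, ⟨u₁*, u₂*⟩) ≅ Alg(∐_{u₁} ∘ F₁ +_I ∐_{u₂} ∘ F₂), sending a dialgebra (c₁ : F₁ X → u₁* X, c₂ : F₂ X → u₂* X) to the algebra obtained by transposing each component across ∐_{u_k} ⊣ u_k* and cotupling across the fibrewise coproduct. -/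
open CategoryTheory Limits

universe v₁ v₂ v₃ u₁ u₂ u₃

variable {C : Type u₁} [Category.{v₁} C]
  {D₁ : Type u₂} [Category.{v₂} D₁] {D₂ : Type u₃} [Category.{v₃} D₂]

/-- A dialgebra for a signature `(⟨F₁,F₂⟩, (u₁,u₂))`: an object `X` of the fibre `P_I`
with maps `c₁ : F₁ X ⟶ u₁* X` and `c₂ : F₂ X ⟶ u₂* X` (where `rₖ = uₖ*`). -/
structure PairDialgebra (F₁ r₁ : C ⥤ D₁) (F₂ r₂ : C ⥤ D₂) where
  A : C
  c₁ : F₁.obj A ⟶ r₁.obj A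
  c₂ : F₂.obj A ⟶ r₂.obj A

namespace PairDialgebra

variable {F₁ r₁ : C ⥤ D₁} {F₂ r₂ : C ⥤ D₂}

/-- The category `Dialg(⟨F₁,F₂⟩, ⟨u₁*,u₂*⟩)`. -/
instance : Category (PairDialgebra F₁ r₁ F₂ r₂) where
  Hom X Y := {h : X.A ⟶ Y.A //
    X.c₁ ≫ r₁.map h = F₁.map h ≫ Y.c₁ ∧ X.c₂ ≫ r₂.map h = F₂.map h ≫ Y.c₂}
  id X := ⟨𝟙 X.A, by simp⟩
  comp {X Y Z} f g := ⟨f.1 ≫ g.1, by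
    obtain ⟨hf₁, hf₂⟩ := f.2; obtain ⟨hg₁, hg₂⟩ := g.2
    constructor <;> simp only [Functor.map_comp, Category.assoc]
    · rw [reassoc_of% hf₁, hg₁]
    · rw [reassoc_of% hf₂, hg₂]⟩
  id_comp f := Subtype.ext (Category.id_comp _)
  comp_id f := Subtype.ext (Category.comp_id _)
  assoc f g h := Subtype.ext (Category.assoc _ _ _)

end PairDialgebra

/-- The endofunctor `∐_{u₁} ∘ F₁ +_I ∐_{u₂} ∘ F₂` on the fibre `P_I`, where
`sₖ = ∐_{uₖ}` is the dependent coproduct and `+_I` the fibrewise coproduct. -/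
noncomputable def sigmaPlus (F₁ : C ⥤ D₁) (F₂ : C ⥤ D₂) (s₁ : D₁ ⥤ C) (s₂ : D₂ ⥤ C)
    [HasBinaryCoproducts C] : C ⥤ C where
  obj X := s₁.obj (F₁.obj X) ⨿ s₂.obj (F₂.obj X)
  map f := coprod.map (s₁.map (F₁.map f)) (s₂.map (F₂.map f))


section Aux

variable {F₁ r₁ : C ⥤ D₁} {F₂ r₂ : C ⥤ D₂}

lemma pd_eqToHom_val {X Y : PairDialgebra F₁ r₁ F₂ r₂} (h : X = Y) :
    (eqToHom h).1 = eqToHom (congrArg PairDialgebra.A h) := by cases h; rfl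

lemma alg_eqToHom_f {T : C ⥤ C} {X Y : Endofunctor.Algebra T} (h : X = Y) :
    (eqToHom h).f = eqToHom (congrArg Endofunctor.Algebra.a h) := by cases h; rfl

variable [HasBinaryCoproducts C] (s₁ : D₁ ⥤ C) (s₂ : D₂ ⥤ C)
  (adj₁ : s₁ ⊣ r₁) (adj₂ : s₂ ⊣ r₂)

/-- The forward functor. -/
noncomputable def PhiAux :
    PairDialgebra F₁ r₁ F₂ r₂ ⥤ Endofunctor.Algebra (sigmaPlus F₁ F₂ s₁ s₂) where
  obj X := ⟨X.A, coprod.desc ((adj₁.homEquiv _ _).symm X.c₁) ((adj₂.homEquiv _ _).symm X.c₂)⟩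
  map {X Y} f :=
    { f := f.1
      h := by
        obtain ⟨h₁, h₂⟩ := f.2
        apply coprod.hom_ext <;>
          simp only [sigmaPlus, coprod.map_desc, coprod.inl_desc, coprod.inr_desc,
            coprod.inl_desc_assoc, coprod.inr_desc_assoc]
        · rw [← Adjunction.homEquiv_naturality_left_symm, ← h₁,
            Adjunction.homEquiv_naturality_right_symm]
        · rw [← Adjunction.homEquiv_naturality_left_symm, ← h₂,
            Adjunction.homEquiv_naturality_right_symm] }
  map_id X := rfl
  map_comp f g := rfl

/-- The backward functor. -/
noncomputable def PsiAux :
    Endofunctor.Algebra (sigmaPlus F₁ F₂ s₁ s₂) ⥤ PairDialgebra F₁ r₁ F₂ r₂ where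
  obj Y := ⟨Y.a, adj₁.homEquiv _ _ (coprod.inl ≫ Y.str), adj₂.homEquiv _ _ (coprod.inr ≫ Y.str)⟩
  map {X Y} f := ⟨f.f, by
    have hf := f.h
    constructor
    · rw [← Adjunction.homEquiv_naturality_right, ← Adjunction.homEquiv_naturality_left]
      congr 1
      erw [Category.assoc, ← hf]
      simp [sigmaPlus]
    · rw [← Adjunction.homEquiv_naturality_right, ← Adjunction.homEquiv_naturality_left]
      congr 1
      erw [Category.assoc, ← hf]
      simp [sigmaPlus]⟩
  map_id X := rfl
  map_comp f g := rfl

noncomputable def initial_transfer {A : Type*} [Category A] {B : Type*} [Category B]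
    (Φ : A ⥤ B) (Ψ : B ⥤ A) (h1 : Φ ⋙ Ψ = 𝟭 A) (h2 : Ψ ⋙ Φ = 𝟭 B)
    {X : A} (hX : IsInitial X) : IsInitial (Φ.obj X) :=
  IsInitial.ofUniqueHom
    (fun Y => Φ.map (hX.to (Ψ.obj Y)) ≫ eqToHom (Functor.congr_obj h2 Y))
    (fun Y m => by
      have e1 := Functor.congr_obj h1 X
      have key := hX.hom_ext (hX.to (Ψ.obj Y)) (eqToHom e1.symm ≫ Ψ.map m)
      rw [key]
      have h3 := Functor.congr_hom h2 m
      rw [Functor.map_comp, eqToHom_map, ← Functor.comp_map, h3]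
      simp)

end Aux

/-- (Theorem 5, algebra case.) In a fibration with fibrewise binary coproducts and
dependent coproducts `∐_{uₖ} ⊣ uₖ*`, for a signature `(⟨F₁,F₂⟩, (u₁,u₂))` there is an
isomorphism of categories `Dialg(⟨F₁,F₂⟩, ⟨u₁*,u₂*⟩) ≅ Alg(∐_{u₁}∘F₁ +_I ∐_{u₂}∘F₂)`,
sending a dialgebra `(c₁, c₂)` to the algebra obtained by transposing each component
across `∐_{uₖ} ⊣ uₖ*` and cotupling across the fibrewise coproduct. In particular the
existence of initial dialgebras and initial algebras coincide. -/
theorem pairDialg_iso_algebras [HasBinaryCoproducts C]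
    (F₁ r₁ : C ⥤ D₁) (F₂ r₂ : C ⥤ D₂) (s₁ : D₁ ⥤ C) (s₂ : D₂ ⥤ C)
    (adj₁ : s₁ ⊣ r₁) (adj₂ : s₂ ⊣ r₂) :
    ∃ (Φ : PairDialgebra F₁ r₁ F₂ r₂ ⥤ Endofunctor.Algebra (sigmaPlus F₁ F₂ s₁ s₂))
      (Ψ : Endofunctor.Algebra (sigmaPlus F₁ F₂ s₁ s₂) ⥤ PairDialgebra F₁ r₁ F₂ r₂),
      Φ ⋙ Ψ = 𝟭 _ ∧ Ψ ⋙ Φ = 𝟭 _ ∧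
      (∀ X : PairDialgebra F₁ r₁ F₂ r₂,
        Φ.obj X = ⟨X.A, coprod.desc ((adj₁.homEquiv _ _).symm X.c₁)
          ((adj₂.homEquiv _ _).symm X.c₂)⟩) ∧
      (∀ X : PairDialgebra F₁ r₁ F₂ r₂,
        Nonempty (IsInitial X) ↔ Nonempty (IsInitial (Φ.obj X))) := by
  
  classical
  have hobj₁ : ∀ X, (PhiAux s₁ s₂ adj₁ adj₂ ⋙ PsiAux s₁ s₂ adj₁ adj₂).obj X
      = (𝟭 (PairDialgebra F₁ r₁ F₂ r₂)).obj X := by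
    rintro ⟨a, c₁, c₂⟩
    simp [PhiAux, PsiAux]
    constructor
    · erw [coprod.inl_desc]; simp
    · erw [coprod.inr_desc]; simp
  have hΦΨ : PhiAux s₁ s₂ adj₁ adj₂ ⋙ PsiAux s₁ s₂ adj₁ adj₂ = 𝟭 (PairDialgebra F₁ r₁ F₂ r₂) := by
    refine CategoryTheory.Functor.ext hobj₁ (fun X Y f => ?_)
    apply Subtype.ext
    have hc : ∀ {P Q R S : PairDialgebra F₁ r₁ F₂ r₂} (g : P ⟶ Q) (h : Q ⟶ R) (k : R ⟶ S),
        (g ≫ h ≫ k : P ⟶ S).1 = g.1 ≫ h.1 ≫ k.1 := fun _ _ _ => rfl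
    rw [hc, pd_eqToHom_val, pd_eqToHom_val]
    simp [PhiAux, PsiAux]
    exact (Category.id_comp _).symm
  have hobj₂ : ∀ X, (PsiAux s₁ s₂ adj₁ adj₂ ⋙ PhiAux s₁ s₂ adj₁ adj₂).obj X
      = (𝟭 (Endofunctor.Algebra (sigmaPlus F₁ F₂ s₁ s₂))).obj X := by
    rintro ⟨a, str⟩
    simp only [PhiAux, PsiAux, Functor.comp_obj, Functor.id_obj]
    congr 1
    apply coprod.hom_ext
    · erw [coprod.inl_desc]; simp
    · erw [coprod.inr_desc]; simp
  have hΨΦ : PsiAux s₁ s₂ adj₁ adj₂ ⋙ PhiAux s₁ s₂ adj₁ adj₂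
      = 𝟭 (Endofunctor.Algebra (sigmaPlus F₁ F₂ s₁ s₂)) := by
    refine CategoryTheory.Functor.ext hobj₂ (fun X Y f => ?_)
    apply Endofunctor.Algebra.Hom.ext
    have hc : ∀ {P Q R S : Endofunctor.Algebra (sigmaPlus F₁ F₂ s₁ s₂)} (g : P ⟶ Q) (h : Q ⟶ R)
        (k : R ⟶ S), (g ≫ h ≫ k : P ⟶ S).f = g.f ≫ h.f ≫ k.f := fun _ _ _ => rfl
    rw [hc, alg_eqToHom_f, alg_eqToHom_f]
    simp [PhiAux, PsiAux]
    exact (Category.id_comp _).symm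
  refine ⟨PhiAux s₁ s₂ adj₁ adj₂, PsiAux s₁ s₂ adj₁ adj₂, hΦΨ, hΨΦ, fun X => rfl, ?_⟩
  · intro X
    constructor
    · rintro ⟨hX⟩
      exact ⟨initial_transfer _ _ hΦΨ hΨΦ hX⟩
    · rintro ⟨hY⟩
      exact ⟨IsInitial.ofIso (initial_transfer _ _ hΨΦ hΦΨ hY)
        (eqToIso (Functor.congr_obj hΦΨ X))⟩
end

section
/- (Theorem 5, coalgebra case) Dually, if P has fibrewise binary products and dependent products (right adjoints ∏_{u_k}), then Dialg(⟨u₁*, u₂*⟩, F) ≅ Coalg(∏_{u₁} ∘ F₁ ×_I ∏_{u₂} ∘ F₂), and in particular the final dialgebra exists iff the final coalgebra exists, and they correspond under the isomorphism. -/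
open CategoryTheory Limits

universe v₁ v₂ v₃ u₁ u₂ u₃

variable {C : Type u₁} [Category.{v₁} C]
  {D₁ : Type u₂} [Category.{v₂} D₁] {D₂ : Type u₃} [Category.{v₃} D₂]

/-- A dialgebra for `(⟨u₁*,u₂*⟩, ⟨F₁,F₂⟩)`: an object `X` of the fibre `P_I` with maps
`c₁ : u₁* X ⟶ F₁ X` and `c₂ : u₂* X ⟶ F₂ X` (where `rₖ = uₖ*`). -/
structure CoPairDialgebra (r₁ F₁ : C ⥤ D₁) (r₂ F₂ : C ⥤ D₂) where
  A : C
  c₁ : r₁.obj A ⟶ F₁.obj A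
  c₂ : r₂.obj A ⟶ F₂.obj A

namespace CoPairDialgebra

variable {r₁ F₁ : C ⥤ D₁} {r₂ F₂ : C ⥤ D₂}

/-- The category `Dialg(⟨u₁*,u₂*⟩, ⟨F₁,F₂⟩)`. -/
instance : Category (CoPairDialgebra r₁ F₁ r₂ F₂) where
  Hom X Y := {h : X.A ⟶ Y.A //
    X.c₁ ≫ F₁.map h = r₁.map h ≫ Y.c₁ ∧ X.c₂ ≫ F₂.map h = r₂.map h ≫ Y.c₂}
  id X := ⟨𝟙 X.A, by simp⟩
  comp {X Y Z} f g := ⟨f.1 ≫ g.1, by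
    obtain ⟨hf₁, hf₂⟩ := f.2; obtain ⟨hg₁, hg₂⟩ := g.2
    constructor <;> simp only [Functor.map_comp, Category.assoc]
    · rw [reassoc_of% hf₁, hg₁]
    · rw [reassoc_of% hf₂, hg₂]⟩
  id_comp f := Subtype.ext (Category.id_comp _)
  comp_id f := Subtype.ext (Category.comp_id _)
  assoc f g h := Subtype.ext (Category.assoc _ _ _)

end CoPairDialgebra

/-- The endofunctor `∏_{u₁} ∘ F₁ ×_I ∏_{u₂} ∘ F₂` on the fibre `P_I`, where
`pₖ = ∏_{uₖ}` is the dependent product and `×_I` the fibrewise product. -/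
noncomputable def piTimes (F₁ : C ⥤ D₁) (F₂ : C ⥤ D₂) (p₁ : D₁ ⥤ C) (p₂ : D₂ ⥤ C)
    [HasBinaryProducts C] : C ⥤ C where
  obj X := p₁.obj (F₁.obj X) ⨯ p₂.obj (F₂.obj X)
  map f := prod.map (p₁.map (F₁.map f)) (p₂.map (F₂.map f))

private lemma coPairDialgebra_eqToHom_val {r₁ F₁ : C ⥤ D₁} {r₂ F₂ : C ⥤ D₂}
    {X Y : CoPairDialgebra r₁ F₁ r₂ F₂} (h : X = Y) :
    (eqToHom h).1 = eqToHom (congrArg CoPairDialgebra.A h) := by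
  cases h; rfl

private lemma coPairDialgebra_comp_val {r₁ F₁ : C ⥤ D₁} {r₂ F₂ : C ⥤ D₂}
    {X Y Z : CoPairDialgebra r₁ F₁ r₂ F₂} (f : X ⟶ Y) (g : Y ⟶ Z) :
    (f ≫ g).1 = f.1 ≫ g.1 := rfl

private lemma coalgebra_eqToHom_f {T : C ⥤ C} {X Y : Endofunctor.Coalgebra T} (h : X = Y) :
    (eqToHom h).f = eqToHom (congrArg Endofunctor.Coalgebra.V h) := by
  cases h; rfl

/-- (Theorem 5, coalgebra case.) In a fibration with fibrewise binary products and
dependent products `uₖ* ⊣ ∏_{uₖ}`, for a signature `(⟨F₁,F₂⟩, (u₁,u₂))` there is an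
isomorphism of categories
`Dialg(⟨u₁*,u₂*⟩, ⟨F₁,F₂⟩) ≅ Coalg(∏_{u₁}∘F₁ ×_I ∏_{u₂}∘F₂)`, sending a dialgebra
`(c₁, c₂)` to the coalgebra obtained by transposing each component across
`uₖ* ⊣ ∏_{uₖ}` and tupling across the fibrewise product; in particular a final
dialgebra exists iff a final coalgebra exists, and they correspond under the
isomorphism. -/
theorem coPairDialg_iso_coalgebras [HasBinaryProducts C]
    (r₁ F₁ : C ⥤ D₁) (r₂ F₂ : C ⥤ D₂) (p₁ : D₁ ⥤ C) (p₂ : D₂ ⥤ C)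
    (adj₁ : r₁ ⊣ p₁) (adj₂ : r₂ ⊣ p₂) :
    ∃ (Φ : CoPairDialgebra r₁ F₁ r₂ F₂ ⥤ Endofunctor.Coalgebra (piTimes F₁ F₂ p₁ p₂))
      (Ψ : Endofunctor.Coalgebra (piTimes F₁ F₂ p₁ p₂) ⥤ CoPairDialgebra r₁ F₁ r₂ F₂),
      Φ ⋙ Ψ = 𝟭 _ ∧ Ψ ⋙ Φ = 𝟭 _ ∧
      (∀ X : CoPairDialgebra r₁ F₁ r₂ F₂,
        Φ.obj X = ⟨X.A, prod.lift (adj₁.homEquiv _ _ X.c₁) (adj₂.homEquiv _ _ X.c₂)⟩) ∧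
      (∀ X : CoPairDialgebra r₁ F₁ r₂ F₂,
        Nonempty (IsTerminal X) ↔ Nonempty (IsTerminal (Φ.obj X))) := by
  classical
  let T := piTimes F₁ F₂ p₁ p₂
  let Φ : CoPairDialgebra r₁ F₁ r₂ F₂ ⥤ Endofunctor.Coalgebra T :=
  { obj := fun X => ⟨X.A, prod.lift (adj₁.homEquiv _ _ X.c₁) (adj₂.homEquiv _ _ X.c₂)⟩
    map := fun {X Y} f => ⟨f.1, by
      obtain ⟨h₁, h₂⟩ := f.2
      dsimp [T, piTimes]
      apply Limits.prod.hom_ext <;>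
        simp only [Category.assoc, prod.lift_map, prod.lift_fst, prod.lift_snd,
          prod.map_fst, prod.map_snd]
      · rw [← adj₁.homEquiv_naturality_right, h₁, adj₁.homEquiv_naturality_left]
      · rw [← adj₂.homEquiv_naturality_right, h₂, adj₂.homEquiv_naturality_left]⟩
    map_id := fun X => rfl
    map_comp := fun f g => rfl }
  let Ψ : Endofunctor.Coalgebra T ⥤ CoPairDialgebra r₁ F₁ r₂ F₂ :=
  { obj := fun X => ⟨X.V, (adj₁.homEquiv _ _).symm (X.str ≫ prod.fst),
      (adj₂.homEquiv _ _).symm (X.str ≫ prod.snd)⟩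
    map := fun {X Y} f => ⟨f.f, by
      have hf : X.str ≫ prod.map (p₁.map (F₁.map f.f)) (p₂.map (F₂.map f.f))
          = f.f ≫ Y.str := f.h
      constructor
      · have h1 : (X.str ≫ prod.fst) ≫ p₁.map (F₁.map f.f) = f.f ≫ (Y.str ≫ prod.fst) := by
          exact (Category.assoc _ _ _).trans ((X.str ≫= (prod.map_fst (p₁.map (F₁.map f.f))
            (p₂.map (F₂.map f.f))).symm).trans (((Category.assoc _ _ _).symm.trans
            (hf =≫ prod.fst)).trans (Category.assoc _ _ _)))
        calc (adj₁.homEquiv _ _).symm (X.str ≫ prod.fst) ≫ F₁.map f.f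
            = (adj₁.homEquiv _ _).symm ((X.str ≫ prod.fst) ≫ p₁.map (F₁.map f.f)) := by
              rw [adj₁.homEquiv_naturality_right_symm]
          _ = (adj₁.homEquiv _ _).symm (f.f ≫ (Y.str ≫ prod.fst)) := by rw [h1]
          _ = r₁.map f.f ≫ (adj₁.homEquiv _ _).symm (Y.str ≫ prod.fst) := by
              rw [adj₁.homEquiv_naturality_left_symm]
      · have h2 : (X.str ≫ prod.snd) ≫ p₂.map (F₂.map f.f) = f.f ≫ (Y.str ≫ prod.snd) := by
          exact (Category.assoc _ _ _).trans ((X.str ≫= (prod.map_snd (p₁.map (F₁.map f.f))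
            (p₂.map (F₂.map f.f))).symm).trans (((Category.assoc _ _ _).symm.trans
            (hf =≫ prod.snd)).trans (Category.assoc _ _ _)))
        calc (adj₂.homEquiv _ _).symm (X.str ≫ prod.snd) ≫ F₂.map f.f
            = (adj₂.homEquiv _ _).symm ((X.str ≫ prod.snd) ≫ p₂.map (F₂.map f.f)) := by
              rw [adj₂.homEquiv_naturality_right_symm]
          _ = (adj₂.homEquiv _ _).symm (f.f ≫ (Y.str ≫ prod.snd)) := by rw [h2]
          _ = r₂.map f.f ≫ (adj₂.homEquiv _ _).symm (Y.str ≫ prod.snd) := by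
              rw [adj₂.homEquiv_naturality_left_symm]⟩
    map_id := fun X => rfl
    map_comp := fun f g => rfl }
  have hΦΨ : Φ ⋙ Ψ = 𝟭 _ := by
    refine CategoryTheory.Functor.ext (fun X => ?_) (fun X Y f => ?_)
    · simp only [Functor.comp_obj, Functor.id_obj, Φ, Ψ]
      congr 1
      · erw [prod.lift_fst]; simp
      · erw [prod.lift_snd]; simp
    · apply Subtype.ext
      simp only [Functor.id_map, coPairDialgebra_comp_val, coPairDialgebra_eqToHom_val,
        eqToHom_refl, Category.comp_id, Category.id_comp]
      rfl
  have hΨΦ : Ψ ⋙ Φ = 𝟭 _ := by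
    refine CategoryTheory.Functor.ext (fun X => ?_) (fun X Y f => ?_)
    · simp only [Functor.comp_obj, Functor.id_obj, Φ, Ψ]
      congr 1
      apply Limits.prod.hom_ext
      · erw [prod.lift_fst]; simp; rfl
      · erw [prod.lift_snd]; simp; rfl
    · apply Endofunctor.Coalgebra.Hom.ext
      simp only [Functor.id_map, Endofunctor.Coalgebra.comp_f, coalgebra_eqToHom_f,
        eqToHom_refl, Category.comp_id, Category.id_comp]
      rfl
  refine ⟨Φ, Ψ, hΦΨ, hΨΦ, fun X => rfl, fun X => ?_⟩
  let e : CoPairDialgebra r₁ F₁ r₂ F₂ ≌ Endofunctor.Coalgebra T :=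
    CategoryTheory.Equivalence.mk Φ Ψ (eqToIso hΦΨ.symm) (eqToIso hΨΦ)
  have : Φ.IsEquivalence := e.isEquivalence_functor
  constructor
  · rintro ⟨h⟩; exact ⟨h.isTerminalObj Φ X⟩
  · rintro ⟨h⟩; exact ⟨h.isTerminalOfObj Φ X⟩
end
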